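/- Let (t_i)_{i=0}^N be a knot sequence, h_N = min over the interior indices of (t_i − t_{i-1}) > 0, and let α < k − 1 be a positive integer. Then for all j and all θ in (t_j, t_{j+k}), |d^α/dθ^α B_{j,k}(θ)| ≤ (2^α / h_N^α) · (k−1)!/(k−α−1)!. -/

import Mathlib

/-- B-splines of order `k` for the knot sequence `t`, defined by the standard
recurrence: `Bspl t j 1` is the indicator of `[t j, t (j+1))` and
`Bspl t j (k+1) = ω_{j,k+1}·Bspl t j k + (1 − ω_{j+1,k+1})·Bspl t (j+1) k`. -/
noncomputable def Bspl (t : ℕ → ℝ) : ℕ → ℕ → ℝ → ℝ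
  | _, 0, _ => 0
  | j, 1, x => if t j ≤ x ∧ x < t (j+1) then 1 else 0
  | j, (k+2), x =>
      ((x - t j) / (t (j+k+1) - t j)) * Bspl t j (k+1) x
        + ((t (j+k+2) - x) / (t (j+k+2) - t (j+1))) * Bspl t (j+1) (k+1) x

section Aux
variable {t : ℕ → ℝ} {hN : ℝ}

lemma Bspl_one (j : ℕ) (x : ℝ) :
    Bspl t j 1 x = if t j ≤ x ∧ x < t (j+1) then 1 else 0 := rfl

lemma Bspl_succ (j k : ℕ) (x : ℝ) :
    Bspl t j (k+2) x = ((x - t j) / (t (j+k+1) - t j)) * Bspl t j (k+1) x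
        + ((t (j+k+2) - x) / (t (j+k+2) - t (j+1))) * Bspl t (j+1) (k+1) x := rfl

lemma knot_gap (hhN : 0 < hN) (hgap : ∀ i : ℕ, hN ≤ t (i+1) - t i)
    {i m : ℕ} (h : i < m) : hN ≤ t m - t i := by
  obtain ⟨n, rfl⟩ : ∃ n, m = i + n + 1 := ⟨m - i - 1, by omega⟩
  induction n with
  | zero => simpa using hgap i
  | succ n ih =>
    have h1 := hgap (i + n + 1)
    have h2 := ih (by omega)
    have : i + (n+1) + 1 = (i + n + 1) + 1 := by ring
    rw [this]
    linarith

lemma knot_lt (hhN : 0 < hN) (hgap : ∀ i : ℕ, hN ≤ t (i+1) - t i)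
    {i m : ℕ} (h : i < m) : t i < t m := by
  have := knot_gap hhN hgap h; linarith

lemma knot_le (hhN : 0 < hN) (hgap : ∀ i : ℕ, hN ≤ t (i+1) - t i)
    {i m : ℕ} (h : i ≤ m) : t i ≤ t m := by
  rcases eq_or_lt_of_le h with rfl | h
  · exact le_refl _
  · exact (knot_lt hhN hgap h).le

lemma knot_pos (hhN : 0 < hN) (hgap : ∀ i : ℕ, hN ≤ t (i+1) - t i)
    {i m : ℕ} (h : i < m) : 0 < t m - t i := by
  have := knot_gap hhN hgap h; linarith

/-- Support of the B-spline. -/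
lemma Bspl_support (hhN : 0 < hN) (hgap : ∀ i : ℕ, hN ≤ t (i+1) - t i) :
    ∀ k j (x : ℝ), (x < t j ∨ t (j+k) ≤ x) → Bspl t j k x = 0 := by
  intro k
  induction k using Nat.strong_induction_on with
  | _ k ih =>
    match k with
    | 0 => intro j x _; rfl
    | 1 =>
      intro j x hx
      rw [Bspl_one, if_neg]
      rintro ⟨h1, h2⟩
      rcases hx with h | h <;> linarith
    | (k+2) =>
      intro j x hx
      rw [Bspl_succ]
      have e1 : Bspl t j (k+1) x = 0 := by
        apply ih (k+1) (by omega)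
        rcases hx with h | h
        · exact Or.inl h
        · right
          exact le_trans (knot_le hhN hgap (by omega)) h
      have e2 : Bspl t (j+1) (k+1) x = 0 := by
        apply ih (k+1) (by omega)
        rcases hx with h | h
        · left; exact lt_of_lt_of_le h (knot_le hhN hgap (by omega))
        · right
          have : j + 1 + (k+1) = j + (k+2) := by omega
          rw [this]; exact h
      rw [e1, e2]; ring

lemma Bspl_nonneg (hhN : 0 < hN) (hgap : ∀ i : ℕ, hN ≤ t (i+1) - t i) :
    ∀ k j (x : ℝ), 0 ≤ Bspl t j k x := by
  intro k
  induction k using Nat.strong_induction_on with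
  | _ k ih =>
    match k with
    | 0 => intro j x; exact le_refl 0
    | 1 => intro j x; rw [Bspl_one]; positivity
    | (k+2) =>
      intro j x
      rw [Bspl_succ]
      have hterm : ∀ (i : ℕ) (w : ℝ), (Bspl t i (k+1) x ≠ 0 → 0 ≤ w) →
          0 ≤ w * Bspl t i (k+1) x := by
        intro i w hw
        by_cases h : Bspl t i (k+1) x = 0
        · rw [h]; ring_nf; exact le_refl 0
        · exact mul_nonneg (hw h) (ih (k+1) (by omega) i x)
      apply add_nonneg
      · apply hterm
        intro hne
        have hx : ¬ (x < t j) := fun h => hne (Bspl_support hhN hgap _ _ _ (Or.inl h))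
        have hd := knot_pos hhN hgap (show j < j+k+1 by omega)
        push_neg at hx
        have : 0 ≤ x - t j := by linarith
        positivity
      · apply hterm
        intro hne
        have hx : ¬ (t (j+1+(k+1)) ≤ x) := fun h => hne (Bspl_support hhN hgap _ _ _ (Or.inr h))
        push_neg at hx
        have hx' : 0 ≤ t (j+k+2) - x := by
          have : j + 1 + (k+1) = j + k + 2 := by omega
          rw [this] at hx; linarith
        have hd := knot_pos hhN hgap (show j+1 < j+k+2 by omega)
        positivity

end Aux
section Aux2
variable {t : ℕ → ℝ} {hN : ℝ}

lemma Bspl_sum_le_one (hhN : 0 < hN) (hgap : ∀ i : ℕ, hN ≤ t (i+1) - t i) :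
    ∀ k n (x : ℝ), ∑ j ∈ Finset.range n, Bspl t j k x ≤ 1 := by
  intro k
  induction k using Nat.strong_induction_on with
  | _ k ih =>
    match k with
    | 0 =>
      intro n x
      simp only [show ∀ j x, Bspl t j 0 x = 0 from fun _ _ => rfl]
      simp
    | 1 =>
      intro n x
      induction n with
      | zero => simp
      | succ n ihn =>
        rw [Finset.sum_range_succ]
        by_cases h : t n ≤ x ∧ x < t (n+1)
        · have hz : ∑ j ∈ Finset.range n, Bspl t j 1 x = 0 := by
            apply Finset.sum_eq_zero
            intro j hj
            simp only [Finset.mem_range] at hj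
            rw [Bspl_one, if_neg]
            rintro ⟨h1, h2⟩
            have : t (j+1) ≤ t n := knot_le hhN hgap (by omega)
            linarith [h.1]
          rw [hz, Bspl_one, if_pos h]; norm_num
        · rw [Bspl_one, if_neg h]; simpa using ihn
    | (k+2) =>
      intro n x
      match n with
      | 0 => simp
      | (m+1) =>
        -- abbreviations
        set B : ℕ → ℝ := fun j => Bspl t j (k+1) x with hB
        have hBsupp : ∀ j, (x < t j ∨ t (j+(k+1)) ≤ x) → B j = 0 :=
          fun j h => Bspl_support hhN hgap (k+1) j x h
        have hBnn : ∀ j, 0 ≤ B j := fun j => Bspl_nonneg hhN hgap (k+1) j x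
        have key : ∀ j, Bspl t j (k+2) x =
            ((x - t j) / (t (j+k+1) - t j)) * B j
              + ((t (j+k+2) - x) / (t (j+k+2) - t (j+1))) * B (j+1) := fun j => Bspl_succ j k x
        -- first weight at index 0 bounded
        have hw1 : ∀ j, ((x - t j) / (t (j+k+1) - t j)) * B j ≤ B j := by
          intro j
          by_cases hx : t (j+k+1) ≤ x
          · rw [hBsupp j (Or.inr (by rw [show j+(k+1) = j+k+1 by omega]; exact hx))]
            simp
          · push_neg at hx
            have hd := knot_pos hhN hgap (show j < j+k+1 by omega)
            have : (x - t j) / (t (j+k+1) - t j) ≤ 1 := by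
              rw [div_le_one hd]; linarith
            nlinarith [hBnn j]
        have hw2 : ∀ j, ((t (j+k+2) - x) / (t (j+k+2) - t (j+1))) * B (j+1) ≤ B (j+1) := by
          intro j
          by_cases hx : x < t (j+1)
          · rw [hBsupp (j+1) (Or.inl hx)]; simp
          · push_neg at hx
            have hd := knot_pos hhN hgap (show j+1 < j+k+2 by omega)
            have : (t (j+k+2) - x) / (t (j+k+2) - t (j+1)) ≤ 1 := by
              rw [div_le_one hd]; linarith
            nlinarith [hBnn (j+1)]
        have hmid : ∀ j, ((x - t (j+1)) / (t (j+1+k+1) - t (j+1))) * B (j+1)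
            + ((t (j+k+2) - x) / (t (j+k+2) - t (j+1))) * B (j+1) = B (j+1) := by
          intro j
          have hd := knot_pos hhN hgap (show j+1 < j+k+2 by omega)
          have h1 : j+1+k+1 = j+k+2 := by omega
          rw [h1, ← add_mul]
          have : (x - t (j+1)) / (t (j+k+2) - t (j+1))
              + (t (j+k+2) - x) / (t (j+k+2) - t (j+1)) = 1 := by
            field_simp
            ring
          rw [this, one_mul]
        calc ∑ j ∈ Finset.range (m+1), Bspl t j (k+2) x
            = ∑ j ∈ Finset.range (m+1), (((x - t j) / (t (j+k+1) - t j)) * B j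
              + ((t (j+k+2) - x) / (t (j+k+2) - t (j+1))) * B (j+1)) := by
              exact Finset.sum_congr rfl (fun j _ => key j)
          _ = (∑ j ∈ Finset.range (m+1), ((x - t j) / (t (j+k+1) - t j)) * B j)
              + ∑ j ∈ Finset.range (m+1), ((t (j+k+2) - x) / (t (j+k+2) - t (j+1))) * B (j+1) := by
              rw [Finset.sum_add_distrib]
          _ = (((x - t 0) / (t (0+k+1) - t 0)) * B 0
                + ∑ j ∈ Finset.range m, ((x - t (j+1)) / (t (j+1+k+1) - t (j+1))) * B (j+1))
              + ((∑ j ∈ Finset.range m, ((t (j+k+2) - x) / (t (j+k+2) - t (j+1))) * B (j+1))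
                + ((t (m+k+2) - x) / (t (m+k+2) - t (m+1))) * B (m+1)) := by
              rw [Finset.sum_range_succ' (fun j => ((x - t j) / (t (j+k+1) - t j)) * B j) m,
                Finset.sum_range_succ]
              ring
          _ ≤ (B 0 + ∑ j ∈ Finset.range m, (B (j+1)
                - ((t (j+k+2) - x) / (t (j+k+2) - t (j+1))) * B (j+1)))
              + ((∑ j ∈ Finset.range m, ((t (j+k+2) - x) / (t (j+k+2) - t (j+1))) * B (j+1))
                + B (m+1)) := by
              gcongr ?_ + ?_ + (?_ + ?_)
              · exact hw1 0
              · apply Finset.sum_le_sum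
                intro j _
                have := hmid j
                linarith
              · exact le_refl _
              · exact hw2 m
          _ = B 0 + ∑ j ∈ Finset.range m, B (j+1) + B (m+1) := by
              rw [Finset.sum_sub_distrib]; ring
          _ = ∑ j ∈ Finset.range (m+2), B j := by
              rw [Finset.sum_range_succ, Finset.sum_range_succ' B m]
              ring
          _ ≤ 1 := ih (k+1) (by omega) (m+2) x

lemma Bspl_le_one (hhN : 0 < hN) (hgap : ∀ i : ℕ, hN ≤ t (i+1) - t i)
    (k j : ℕ) (x : ℝ) : Bspl t j k x ≤ 1 := by
  calc Bspl t j k x ≤ ∑ i ∈ Finset.range (j+1), Bspl t i k x := by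
        apply Finset.single_le_sum (f := fun i => Bspl t i k x)
          (fun i _ => Bspl_nonneg hhN hgap k i x)
        simp
    _ ≤ 1 := Bspl_sum_le_one hhN hgap k (j+1) x

end Aux2
section Aux3
open Set Filter
variable {t : ℕ → ℝ} {hN : ℝ}

lemma Bspl_two_eq (hhN : 0 < hN) (hgap : ∀ i : ℕ, hN ≤ t (i+1) - t i) (j : ℕ) :
    Bspl t j 2 = fun x => max 0 (min ((x - t j)/(t (j+1) - t j)) ((t (j+2) - x)/(t (j+2) - t (j+1)))) := by
  funext x
  have d1 : 0 < t (j+1) - t j := knot_pos hhN hgap (by omega)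
  have d2 : 0 < t (j+2) - t (j+1) := knot_pos hhN hgap (by omega)
  show Bspl t j (0+2) x = _
  rw [Bspl_succ, Bspl_one, Bspl_one]
  simp only [show j+0+1 = j+1 from rfl, show j+0+2 = j+2 from rfl]
  rcases lt_or_ge x (t j) with h1 | h1
  · rw [if_neg (by intro h; linarith [h.1]), if_neg (by intro h; linarith [h.1])]
    have hA : (x - t j)/(t (j+1) - t j) ≤ 0 := by
      apply div_nonpos_of_nonpos_of_nonneg <;> linarith
    rw [max_eq_left (le_trans (min_le_left _ _) hA)]
    ring
  · rcases lt_or_ge x (t (j+1)) with h2 | h2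
    · rw [if_pos ⟨h1, h2⟩, if_neg (by intro h; linarith [h.1])]
      have hmin : min ((x - t j)/(t (j+1) - t j)) ((t (j+2) - x)/(t (j+2) - t (j+1)))
          = (x - t j)/(t (j+1) - t j) := by
        apply min_eq_left
        rw [div_le_div_iff₀ d1 d2]
        nlinarith
      rw [hmin, max_eq_right (div_nonneg (by linarith) (by linarith))]
      ring
    · rcases lt_or_ge x (t (j+2)) with h3 | h3
      · rw [if_neg (by intro h; linarith [h.2]), if_pos ⟨h2, h3⟩]
        have hmin : min ((x - t j)/(t (j+1) - t j)) ((t (j+2) - x)/(t (j+2) - t (j+1)))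
            = (t (j+2) - x)/(t (j+2) - t (j+1)) := by
          apply min_eq_right
          rw [div_le_div_iff₀ d2 d1]
          nlinarith
        have h0 : 0 ≤ (t (j+2) - x)/(t (j+2) - t (j+1)) := by
          apply div_nonneg <;> linarith
        rw [hmin, max_eq_right h0]
        ring
      · rw [if_neg (by intro h; linarith [h.2]), if_neg (by intro h; linarith [h.2])]
        have hB : (t (j+2) - x)/(t (j+2) - t (j+1)) ≤ 0 := by
          apply div_nonpos_of_nonpos_of_nonneg <;> linarith
        rw [max_eq_left (le_trans (min_le_right _ _) hB)]
        ring

lemma Bspl_cont (hhN : 0 < hN) (hgap : ∀ i : ℕ, hN ≤ t (i+1) - t i) :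
    ∀ k j, Continuous (Bspl t j (k+2)) := by
  intro k
  induction k with
  | zero =>
    intro j
    rw [show (0+2 : ℕ) = 2 from rfl, Bspl_two_eq hhN hgap j]
    apply continuous_const.max
    apply Continuous.min
    · exact (continuous_id.sub continuous_const).div_const _
    · exact (continuous_const.sub continuous_id).div_const _
  | succ k ih =>
    intro j
    have heq : Bspl t j (k+1+2) = fun x =>
        ((x - t j) / (t (j+(k+1)+1) - t j)) * Bspl t j (k+2) x
          + ((t (j+(k+1)+2) - x) / (t (j+(k+1)+2) - t (j+1))) * Bspl t (j+1) (k+2) x :=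
      funext fun x => Bspl_succ j (k+1) x
    rw [heq]
    apply Continuous.add
    · exact (((continuous_id.sub continuous_const).div_const _).mul (ih j))
    · exact (((continuous_const.sub continuous_id).div_const _).mul (ih (j+1)))

lemma indic_loc (i : ℕ) (x : ℝ) (h1 : t i ≠ x) (h2 : t (i+1) ≠ x) :
    (fun y => Bspl t i 1 y) =ᶠ[nhds x] (fun _ => Bspl t i 1 x) := by
  rcases lt_trichotomy x (t i) with h | h | h
  · filter_upwards [Iio_mem_nhds h] with y hy
    rw [Bspl_one, Bspl_one, if_neg (fun hc => absurd hc.1 (not_le.mpr hy)),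
      if_neg (fun hc => absurd hc.1 (not_le.mpr h))]
  · exact absurd h.symm h1
  · rcases lt_trichotomy x (t (i+1)) with h' | h' | h'
    · filter_upwards [Ioo_mem_nhds h h'] with y hy
      rw [Bspl_one, Bspl_one, if_pos ⟨hy.1.le, hy.2⟩, if_pos ⟨h.le, h'⟩]
    · exact absurd h'.symm h2
    · filter_upwards [Ioi_mem_nhds h'] with y hy
      rw [Bspl_one, Bspl_one, if_neg (fun hc => absurd hc.2 (not_lt.mpr hy.le)),
        if_neg (fun hc => absurd hc.2 (not_lt.mpr h'.le))]

lemma Bspl_hasDerivAt_nonknot (hhN : 0 < hN) (hgap : ∀ i : ℕ, hN ≤ t (i+1) - t i) :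
    ∀ k j (x : ℝ), (∀ i, t i ≠ x) →
      HasDerivAt (Bspl t j (k+2))
        (((k:ℝ)+1) * (Bspl t j (k+1) x / (t (j+k+1) - t j)
          - Bspl t (j+1) (k+1) x / (t (j+k+2) - t (j+1)))) x := by
  intro k
  induction k with
  | zero =>
    intro j x hx
    have d1 : (0:ℝ) < t (j+1) - t j := knot_pos hhN hgap (by omega)
    have d2 : (0:ℝ) < t (j+2) - t (j+1) := knot_pos hhN hgap (by omega)
    have hA : HasDerivAt (fun y : ℝ => ((y - t j) / (t (j+0+1) - t j)) * Bspl t j 1 x)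
        ((1 / (t (j+0+1) - t j)) * Bspl t j 1 x) x :=
      (((hasDerivAt_id x).sub_const (t j)).div_const _).mul_const _
    have hB : HasDerivAt (fun y : ℝ => ((t (j+0+2) - y) / (t (j+0+2) - t (j+1))) * Bspl t (j+1) 1 x)
        (((0 - 1) / (t (j+0+2) - t (j+1))) * Bspl t (j+1) 1 x) x :=
      ((((hasDerivAt_const x (t (j+0+2))).sub (hasDerivAt_id x)).div_const _)).mul_const _
    have hsum := hA.add hB
    have heqv : (fun y => Bspl t j (0+2) y)
        =ᶠ[nhds x] (fun y : ℝ => ((y - t j) / (t (j+0+1) - t j)) * Bspl t j 1 x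
          + ((t (j+0+2) - y) / (t (j+0+2) - t (j+1))) * Bspl t (j+1) 1 x) := by
      filter_upwards [indic_loc j x (hx j) (hx (j+1)),
        indic_loc (j+1) x (hx (j+1)) (hx (j+2))] with y hy1 hy2
      rw [Bspl_succ, hy1, hy2]
    have := hsum.congr_of_eventuallyEq heqv
    refine this.congr_deriv ?_
    simp only [show j+0+1 = j+1 from rfl, show j+0+2 = j+2 from rfl]
    push_cast
    field_simp
    ring
  | succ k ih =>
    intro j x hx
    have e1 : (0:ℝ) < t (j+k+1) - t j := knot_pos hhN hgap (by omega)
    have e2 : (0:ℝ) < t (j+k+2) - t (j+1) := knot_pos hhN hgap (by omega)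
    have e3 : (0:ℝ) < t (j+k+3) - t (j+2) := knot_pos hhN hgap (by omega)
    have dd1 : (0:ℝ) < t (j+k+2) - t j := knot_pos hhN hgap (by omega)
    have dd2 : (0:ℝ) < t (j+k+3) - t (j+1) := knot_pos hhN hgap (by omega)
    have h1 := ih j x hx
    have h2 := ih (j+1) x hx
    have hw1 : HasDerivAt (fun y : ℝ => (y - t j) / (t (j+(k+1)+1) - t j))
        (1 / (t (j+(k+1)+1) - t j)) x :=
      ((hasDerivAt_id x).sub_const (t j)).div_const _
    have hw2 : HasDerivAt (fun y : ℝ => (t (j+(k+1)+2) - y) / (t (j+(k+1)+2) - t (j+1)))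
        ((0 - 1) / (t (j+(k+1)+2) - t (j+1))) x :=
      ((hasDerivAt_const x (t (j+(k+1)+2))).sub (hasDerivAt_id x)).div_const _
    have hsum := (hw1.mul h1).add (hw2.mul h2)
    have heq : Bspl t j (k+1+2) = fun y =>
        ((y - t j) / (t (j+(k+1)+1) - t j)) * Bspl t j (k+2) y
          + ((t (j+(k+1)+2) - y) / (t (j+(k+1)+2) - t (j+1))) * Bspl t (j+1) (k+2) y :=
      funext fun y => Bspl_succ j (k+1) y
    rw [heq]
    refine hsum.congr_deriv ?_
    rw [Bspl_succ j k x, Bspl_succ (j+1) k x]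
    simp only [show j+(k+1)+1 = j+k+2 by omega, show j+(k+1)+2 = j+k+3 by omega,
      show j+1+k+1 = j+k+2 by omega, show j+1+k+2 = j+k+3 by omega,
      show j+1+1 = j+2 by omega, show j+(k+1) = j+k+1 by omega]
    push_cast
    field_simp
    ring
end Aux3
section Aux4
open Set Filter
variable {t : ℕ → ℝ} {hN : ℝ}

lemma Bspl_hasDerivAt_aux (hhN : 0 < hN) (hgap : ∀ i : ℕ, hN ≤ t (i+1) - t i)
    (K j : ℕ) (x : ℝ) :
    HasDerivAt (Bspl t j (K+3))
      (((K:ℝ)+2) * (Bspl t j (K+2) x / (t (j+K+2) - t j)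
        - Bspl t (j+1) (K+2) x / (t (j+K+3) - t (j+1)))) x := by
  set g : ℝ → ℝ := fun y => ((K:ℝ)+2) * (Bspl t j (K+2) y / (t (j+K+2) - t j)
      - Bspl t (j+1) (K+2) y / (t (j+K+3) - t (j+1))) with hg_def
  have hg : Continuous g := by
    apply continuous_const.mul
    exact ((Bspl_cont hhN hgap K j).div_const _).sub
      ((Bspl_cont hhN hgap K (j+1)).div_const _)
  have hf : Continuous (Bspl t j (K+3)) := Bspl_cont hhN hgap (K+1) j
  have key : ∀ y : ℝ, (∀ i, t i ≠ y) → HasDerivAt (Bspl t j (K+3)) (g y) y := by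
    intro y hy
    have h := Bspl_hasDerivAt_nonknot hhN hgap (K+1) j y hy
    convert h using 1
    simp only [hg_def, show K+1+1 = K+2 by omega, show j+(K+1)+1 = j+K+2 by omega,
      show j+(K+1)+2 = j+K+3 by omega]
    push_cast
    ring
  show HasDerivAt (Bspl t j (K+3)) (g x) x
  by_cases hx : ∀ i, t i ≠ x
  · exact key x hx
  · push_neg at hx
    obtain ⟨i0, hi0⟩ := hx
    have hleft : HasDerivWithinAt (Bspl t j (K+3)) (g x) (Iic x) x := by
      have hsub : ∀ y ∈ Ioo (x - hN) x, ∀ i, t i ≠ y := by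
        intro y hy i hti
        rcases lt_or_ge i i0 with h | h
        · have : hN ≤ t i0 - t i := knot_gap hhN hgap h
          rw [hti, hi0] at this
          linarith [hy.1]
        · have : t i0 ≤ t i := knot_le hhN hgap h
          rw [hti, hi0] at this
          linarith [hy.2]
      have hmem : Set.Ioo (x - hN) x ∈ nhdsWithin x (Set.Iio x) :=
        Ioo_mem_nhdsLT_of_mem ⟨by linarith, le_refl x⟩
      apply hasDerivWithinAt_Iic_of_tendsto_deriv
        (f_diff := fun y hy => ((key y (hsub y hy)).differentiableAt).differentiableWithinAt)
        (f_lim := hf.continuousWithinAt)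
        (hs := hmem)
      have hev : (fun y => deriv (Bspl t j (K+3)) y) =ᶠ[nhdsWithin x (Iio x)] g := by
        apply Filter.eventuallyEq_of_mem hmem
        intro y hy
        exact (key y (hsub y hy)).deriv
      exact Filter.Tendsto.congr' hev.symm
        ((hg.continuousAt.tendsto).mono_left nhdsWithin_le_nhds)
    have hright : HasDerivWithinAt (Bspl t j (K+3)) (g x) (Ici x) x := by
      have hsub : ∀ y ∈ Ioo x (x + hN), ∀ i, t i ≠ y := by
        intro y hy i hti
        rcases le_or_gt i i0 with h | h
        · have : t i ≤ t i0 := knot_le hhN hgap h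
          rw [hti, hi0] at this
          exact absurd this (not_le.mpr hy.1)
        · have : hN ≤ t i - t i0 := knot_gap hhN hgap h
          rw [hti, hi0] at this
          linarith [hy.2]
      have hmem : Set.Ioo x (x + hN) ∈ nhdsWithin x (Set.Ioi x) :=
        Ioo_mem_nhdsGT_of_mem ⟨le_refl x, by linarith⟩
      apply hasDerivWithinAt_Ici_of_tendsto_deriv
        (f_diff := fun y hy => ((key y (hsub y hy)).differentiableAt).differentiableWithinAt)
        (f_lim := hf.continuousWithinAt)
        (hs := hmem)
      have hev : (fun y => deriv (Bspl t j (K+3)) y) =ᶠ[nhdsWithin x (Ioi x)] g := by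
        apply Filter.eventuallyEq_of_mem hmem
        intro y hy
        exact (key y (hsub y hy)).deriv
      exact Filter.Tendsto.congr' hev.symm
        ((hg.continuousAt.tendsto).mono_left nhdsWithin_le_nhds)
    have := hleft.union hright
    rw [Set.Iic_union_Ici] at this
    exact hasDerivWithinAt_univ.mp this
end Aux4
section Aux5
open Set Filter
variable {t : ℕ → ℝ} {hN : ℝ}

lemma Bspl_iter (hhN : 0 < hN) (hgap : ∀ i : ℕ, hN ≤ t (i+1) - t i)
    (k m j : ℕ) (hm1 : 1 ≤ m) (hmk : m + 2 ≤ k) :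
    ∃ c : ℕ → ℝ,
      (∀ i, |c i| ≤ (m.choose i : ℝ) *
        (((k-1).factorial : ℝ) / (((k-1-m).factorial : ℝ)) / hN^m)) ∧
      ∀ x, deriv^[m] (Bspl t j k) x
        = ∑ i ∈ Finset.range (m+1), c i * Bspl t (j+i) (k-m) x := by
  induction m with
  | zero => omega
  | succ m ih =>
    rcases Nat.eq_zero_or_pos m with rfl | hm
    · -- base case m+1 = 1
      obtain ⟨K, rfl⟩ : ∃ K, k = K + 3 := ⟨k - 3, by omega⟩
      have d1 : (0:ℝ) < t (j+K+2) - t j := knot_pos hhN hgap (by omega)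
      have d2 : (0:ℝ) < t (j+K+3) - t (j+1) := knot_pos hhN hgap (by omega)
      have g1 : hN ≤ t (j+K+2) - t j := knot_gap hhN hgap (by omega)
      have g2 : hN ≤ t (j+K+3) - t (j+1) := knot_gap hhN hgap (by omega)
      refine ⟨fun i => if i = 0 then ((K:ℝ)+2)/(t (j+K+2) - t j)
        else if i = 1 then -(((K:ℝ)+2)/(t (j+K+3) - t (j+1))) else 0, ?_, ?_⟩
      · intro i
        have hfac : ((K+3-1).factorial : ℝ) / ((K+3-1-(0+1)).factorial : ℝ) = (K:ℝ)+2 := by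
          have e1 : K+3-1 = (K+1)+1 := by omega
          have e2 : K+3-1-(0+1) = K+1 := by omega
          rw [e2, e1, Nat.factorial_succ]
          have : ((K+1).factorial : ℝ) ≠ 0 := Nat.cast_ne_zero.mpr (Nat.factorial_ne_zero _)
          push_cast
          field_simp
          ring
        rw [hfac]
        match i with
        | 0 =>
          show |((K:ℝ)+2)/(t (j+K+2) - t j)| ≤ ((Nat.choose (0+1) 0 : ℕ) : ℝ) * (((K:ℝ)+2) / hN^(0+1))
          rw [abs_of_nonneg (le_of_lt (div_pos (by positivity) d1)), pow_one]
          have h1 : ((Nat.choose (0+1) 0 : ℕ) : ℝ) = 1 := by norm_num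
          rw [h1, one_mul]
          rw [div_le_div_iff₀ d1 hhN]
          nlinarith
        | 1 =>
          show |-(((K:ℝ)+2)/(t (j+K+3) - t (j+1)))| ≤ ((Nat.choose (0+1) 1 : ℕ) : ℝ) * (((K:ℝ)+2) / hN^(0+1))
          rw [abs_neg, abs_of_nonneg (le_of_lt (div_pos (by positivity) d2)), pow_one]
          have h1 : ((Nat.choose (0+1) 1 : ℕ) : ℝ) = 1 := by norm_num
          rw [h1, one_mul]
          rw [div_le_div_iff₀ d2 hhN]
          nlinarith
        | (i+2) =>
          show |(0:ℝ)| ≤ ((Nat.choose (0+1) (i+2) : ℕ) : ℝ) * (((K:ℝ)+2) / hN^(0+1))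
          rw [abs_zero]
          have h1 : Nat.choose (0+1) (i+2) = 0 := Nat.choose_eq_zero_of_lt (by omega)
          rw [h1]
          positivity
      · intro x
        have hder := Bspl_hasDerivAt_aux hhN hgap K j x
        rw [Function.iterate_one]
        rw [hder.deriv]
        rw [Finset.sum_range_succ, Finset.sum_range_succ, Finset.sum_range_zero]
        show _ = 0 + (((K:ℝ)+2)/(t (j+K+2) - t j)) * Bspl t (j+0) (K+3-(0+1)) x
          + (-(((K:ℝ)+2)/(t (j+K+3) - t (j+1)))) * Bspl t (j+1) (K+3-(0+1)) x
        simp only [show K+3-(0+1) = K+2 by omega, show j+0 = j by omega]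
        ring
    · -- inductive step
      have hm2 : m + 2 ≤ k := by omega
      obtain ⟨c, hbd, hsum⟩ := ih hm hm2
      obtain ⟨K, hK⟩ : ∃ K, k - m = K + 3 := ⟨k - m - 3, by omega⟩
      have hK2 : k - (m+1) = K + 2 := by omega
      have hK3 : k - 1 - m = K + 2 := by omega
      have hK4 : k - 1 - (m+1) = K + 1 := by omega
      have hczero : ∀ i, m < i → c i = 0 := by
        intro i hi
        have h0 := hbd i
        rw [Nat.choose_eq_zero_of_lt hi] at h0
        simp only [Nat.cast_zero, zero_mul] at h0
        exact abs_eq_zero.mp (le_antisymm h0 (abs_nonneg _))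
      set F : ℝ := ((k-1).factorial : ℝ) with hF
      set A : ℝ := F / (((K+2).factorial : ℝ)) / hN^m with hA
      have hbd' : ∀ i, |c i| ≤ (m.choose i : ℝ) * A := by
        intro i
        have := hbd i
        rwa [hK3] at this
      refine ⟨fun i => ((K:ℝ)+2) * ((c i - (if i = 0 then 0 else c (i-1)))
          / (t (j+i+K+2) - t (j+i))), ?_, ?_⟩
      · -- bounds
        intro i
        have hD : hN ≤ t (j+i+K+2) - t (j+i) := knot_gap hhN hgap (by omega)
        have hDpos : (0:ℝ) < t (j+i+K+2) - t (j+i) := by linarith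
        have hfac : ((K+2).factorial : ℝ) = ((K:ℝ)+2) * ((K+1).factorial : ℝ) := by
          rw [show K+2 = (K+1)+1 from rfl, Nat.factorial_succ]
          push_cast
          ring
        have habs : |((K:ℝ)+2) * ((c i - (if i = 0 then 0 else c (i-1)))
            / (t (j+i+K+2) - t (j+i)))|
            ≤ ((K:ℝ)+2) * ((|c i| + |(if i = 0 then 0 else c (i-1))|) / hN) := by
          rw [abs_mul, abs_div, abs_of_nonneg (by positivity : (0:ℝ) ≤ (K:ℝ)+2),
            abs_of_pos hDpos]
          have htri : |c i - (if i = 0 then 0 else c (i-1))|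
              ≤ |c i| + |(if i = 0 then 0 else c (i-1))| := by
            rw [sub_eq_add_neg]
            exact (abs_add_le _ _).trans (by rw [abs_neg])
          gcongr
        rw [hK4]
        apply habs.trans
        match i with
        | 0 =>
          simp only [reduceIte, abs_zero, add_zero]
          calc ((K:ℝ)+2) * (|c 0| / hN) ≤ ((K:ℝ)+2) * (((m.choose 0 : ℝ) * A) / hN) := by
                gcongr
                exact hbd' 0
            _ = ((m+1).choose 0 : ℝ) * (F / ((K+1).factorial : ℝ) / hN^(m+1)) := by
                rw [Nat.choose_zero_right, Nat.choose_zero_right, hA, hfac]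
                have h1 : ((K+1).factorial : ℝ) ≠ 0 := Nat.cast_ne_zero.mpr (Nat.factorial_ne_zero _)
                have h2 : hN ≠ 0 := ne_of_gt hhN
                push_cast
                field_simp
                ring
        | (i+1) =>
          simp only [if_neg (Nat.succ_ne_zero i), show i+1-1 = i from rfl]
          calc ((K:ℝ)+2) * ((|c (i+1)| + |c i|) / hN)
              ≤ ((K:ℝ)+2) * ((((m.choose (i+1) : ℝ) * A) + ((m.choose i : ℝ) * A)) / hN) := by
                gcongr
                · exact hbd' (i+1)
                · exact hbd' i
            _ = (((m+1).choose (i+1) : ℝ)) * (F / ((K+1).factorial : ℝ) / hN^(m+1)) := by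
                rw [Nat.choose_succ_succ]
                have h1 : ((K+1).factorial : ℝ) ≠ 0 := Nat.cast_ne_zero.mpr (Nat.factorial_ne_zero _)
                have h2 : hN ≠ 0 := ne_of_gt hhN
                rw [hA, hfac]
                push_cast
                field_simp
                ring
      · -- sum formula
        intro x
        have hfun : deriv^[m] (Bspl t j k) = fun y => ∑ i ∈ Finset.range (m+1),
            c i * Bspl t (j+i) (K+3) y := by
          funext y
          rw [hsum y, hK]
        have hS : HasDerivAt (fun y => ∑ i ∈ Finset.range (m+1), c i * Bspl t (j+i) (K+3) y)
            (∑ i ∈ Finset.range (m+1), c i * (((K:ℝ)+2) *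
              (Bspl t (j+i) (K+2) x / (t (j+i+K+2) - t (j+i))
                - Bspl t (j+i+1) (K+2) x / (t (j+i+K+3) - t (j+i+1))))) x := by
          apply HasDerivAt.fun_sum
          intro i _
          exact (Bspl_hasDerivAt_aux hhN hgap K (j+i) x).const_mul (c i)
        rw [hK2, Function.iterate_succ_apply', hfun, hS.deriv]
        -- now pure sum manipulation
        set P : ℕ → ℝ := fun i => Bspl t (j+i) (K+2) x with hP
        set D : ℕ → ℝ := fun i => t (j+i+K+2) - t (j+i) with hD
        have hstep : ∀ i, c i * (((K:ℝ)+2) * (Bspl t (j+i) (K+2) x / (t (j+i+K+2) - t (j+i))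
                - Bspl t (j+i+1) (K+2) x / (t (j+i+K+3) - t (j+i+1))))
            = ((K:ℝ)+2) * (c i / D i) * P i - ((K:ℝ)+2) * (c i / D (i+1)) * P (i+1) := by
          intro i
          simp only [hP, hD, show ∀ n, j+(n+1) = j+n+1 from fun n => by omega,
            show ∀ n, j+(n+1)+K+2 = j+n+K+3 from fun n => by omega]
          ring
        rw [Finset.sum_congr rfl (fun i _ => hstep i), Finset.sum_sub_distrib]
        have hR : ∀ i, ((K:ℝ)+2) * ((c i - (if i = 0 then 0 else c (i-1))) / D i) * P i
            = ((K:ℝ)+2) * (c i / D i) * P i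
              - ((K:ℝ)+2) * ((if i = 0 then 0 else c (i-1)) / D i) * P i := by
          intro i; ring
        calc (∑ i ∈ Finset.range (m+1), ((K:ℝ)+2) * (c i / D i) * P i)
              - ∑ i ∈ Finset.range (m+1), ((K:ℝ)+2) * (c i / D (i+1)) * P (i+1)
            = (∑ i ∈ Finset.range (m+2), ((K:ℝ)+2) * (c i / D i) * P i)
              - ∑ i ∈ Finset.range (m+2), ((K:ℝ)+2) * ((if i = 0 then 0 else c (i-1)) / D i) * P i := by
              rw [Finset.sum_range_succ (fun i => ((K:ℝ)+2) * (c i / D i) * P i) (m+1)]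
              rw [Finset.sum_range_succ' (fun i => ((K:ℝ)+2) * ((if i = 0 then 0 else c (i-1)) / D i) * P i) (m+1)]
              simp only [hczero (m+1) (by omega), reduceIte, Nat.succ_ne_zero, if_false]
              simp only [show ∀ n : ℕ, n+1-1 = n from fun n => rfl]
              ring
          _ = ∑ i ∈ Finset.range (m+2),
                ((K:ℝ)+2) * ((c i - (if i = 0 then 0 else c (i-1))) / D i) * P i := by
              rw [← Finset.sum_sub_distrib]
              exact (Finset.sum_congr rfl (fun i _ => (hR i).symm))
          _ = ∑ i ∈ Finset.range (m+2),
                ((K:ℝ)+2) * ((c i - (if i = 0 then 0 else c (i-1))) / (t (j+i+K+2) - t (j+i)))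
                  * Bspl t (j+i) (K+2) x := rfl

end Aux5

theorem stmt_13 (t : ℕ → ℝ) (k : ℕ) (hN : ℝ) (hhN : 0 < hN)
    (hgap : ∀ i : ℕ, hN ≤ t (i+1) - t i)
    (α : ℕ) (hα1 : 1 ≤ α) (hαk : α < k - 1) :
    ∀ j : ℕ, ∀ θ ∈ Set.Ioo (t j) (t (j+k)),
      |iteratedDeriv α (fun x => Bspl t j k x) θ| ≤
        (2 ^ α / hN ^ α) * ((Nat.factorial (k-1) : ℝ) / (Nat.factorial (k-α-1) : ℝ)) := by
  intro j θ _
  have h3 : α + 2 ≤ k := by omega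
  obtain ⟨c, hbd, hsum⟩ := Bspl_iter hhN hgap k α j hα1 h3
  rw [iteratedDeriv_eq_iterate]
  show |deriv^[α] (Bspl t j k) θ| ≤ _
  rw [hsum θ]
  set A : ℝ := ((k-1).factorial : ℝ) / ((k-1-α).factorial : ℝ) / hN^α with hA
  have hAnn : 0 ≤ A := by positivity
  calc |∑ i ∈ Finset.range (α+1), c i * Bspl t (j+i) (k-α) θ|
      ≤ ∑ i ∈ Finset.range (α+1), |c i * Bspl t (j+i) (k-α) θ| :=
        Finset.abs_sum_le_sum_abs _ _
    _ ≤ ∑ i ∈ Finset.range (α+1), (α.choose i : ℝ) * A := by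
        apply Finset.sum_le_sum
        intro i _
        rw [abs_mul]
        have hB0 : 0 ≤ Bspl t (j+i) (k-α) θ := Bspl_nonneg hhN hgap _ _ _
        have hB1 : Bspl t (j+i) (k-α) θ ≤ 1 := Bspl_le_one hhN hgap _ _ _
        have h1 : |Bspl t (j+i) (k-α) θ| ≤ 1 := by rw [abs_of_nonneg hB0]; exact hB1
        calc |c i| * |Bspl t (j+i) (k-α) θ| ≤ ((α.choose i : ℝ) * A) * 1 := by
              apply mul_le_mul (hbd i) h1 (abs_nonneg _)
              positivity
          _ = (α.choose i : ℝ) * A := by ring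
    _ = (2:ℝ)^α * A := by
        rw [← Finset.sum_mul, ← Nat.cast_sum, Nat.sum_range_choose]
        push_cast
        ring
    _ = (2 ^ α / hN ^ α) * ((Nat.factorial (k-1) : ℝ) / (Nat.factorial (k-α-1) : ℝ)) := by
        rw [hA, show k-1-α = k-α-1 by omega]
        field_simp
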